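/- The characteristic function φ(t) = (1/√(2π)) ∫_{-∞}^∞ e^{-x²/2} e^{itx³} dx of the cube of a standard normal random variable satisfies the second-order ODE 27t³·φ''(t) + (81t² + 1)·φ'(t) + 15t·φ(t) = 0 for all real t. -/

import Mathlib

open MeasureTheory

/-- The characteristic function of the cube of a standard normal random variable,
`φ(t) = (2π)^{-1/2} ∫_ℝ e^{-x²/2} e^{itx³} dx`. -/
noncomputable def phiCube (t : ℝ) : ℂ :=
  (1 / (Real.sqrt (2 * Real.pi) : ℂ)) *
    ∫ x : ℝ, Complex.exp (-(x : ℂ) ^ 2 / 2 + Complex.I * (t : ℂ) * (x : ℂ) ^ 3)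

section Aux

open Filter Complex Set Topology

noncomputable section
namespace SC13

/-- The exponent. -/
def fc (t x : ℝ) : ℂ := -(x:ℂ)^2/2 + Complex.I * t * x^3

lemma norm_exp_fc (t x : ℝ) : ‖Complex.exp (fc t x)‖ = Real.exp (-(2⁻¹:ℝ) * x^2) := by
  have h : fc t x = Complex.I * ((t * x^3 : ℝ) : ℂ) + ((-(2⁻¹) * x^2 : ℝ) : ℂ) := by
    unfold fc; push_cast; ring
  rw [h, Complex.norm_exp]
  simp [← Complex.ofReal_pow]

lemma gauss_int (n : ℕ) :
    Integrable (fun x : ℝ => x ^ n * Real.exp (-(2⁻¹:ℝ) * x^2)) := by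
  have h := integrable_rpow_mul_exp_neg_mul_sq (b := (2⁻¹:ℝ)) (by norm_num)
    (s := (n:ℝ)) (lt_of_lt_of_le neg_one_lt_zero (Nat.cast_nonneg n))
  simpa [Real.rpow_natCast] using h

lemma integrable_dom {G : Type*} [NormedAddCommGroup G] {g : ℝ → G} (hc : Continuous g)
    (C : ℝ) (n : ℕ)
    (h : ∀ x : ℝ, ‖g x‖ ≤ C * ((1 + x ^ n) * Real.exp (-(2⁻¹:ℝ) * x^2))) :
    Integrable g := by
  have h0 : Integrable (fun x : ℝ => Real.exp (-(2⁻¹:ℝ) * x^2)) := by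
    simpa using gauss_int 0
  have h1 : Integrable (fun x : ℝ => C * ((1 + x ^ n) * Real.exp (-(2⁻¹:ℝ) * x^2))) := by
    have := (h0.add (gauss_int n)).const_mul C
    refine this.congr (Eventually.of_forall fun x => ?_)
    simp only [Pi.add_apply]
    ring
  exact h1.mono' hc.aestronglyMeasurable (Eventually.of_forall h)


lemma cont_exp_fc (t : ℝ) : Continuous fun x : ℝ => Complex.exp (fc t x) := by
  unfold fc; fun_prop

lemma hasDerivAt_exp_fc (t x : ℝ) :
    HasDerivAt (fun u : ℝ => Complex.exp (fc u x))
      (Complex.I * (x:ℂ)^3 * Complex.exp (fc t x)) t := by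
  have h1 : HasDerivAt (fun z : ℂ => -(x:ℂ)^2/2 + Complex.I * z * (x:ℂ)^3)
      (Complex.I * (x:ℂ)^3) (t:ℂ) := by
    simpa using (((hasDerivAt_id ((t:ℝ):ℂ)).const_mul Complex.I).mul_const ((x:ℂ)^3)).const_add
      (-(x:ℂ)^2/2)
  have h2 := h1.cexp
  have h3 := h2.comp_ofReal (z := t)
  refine h3.congr_deriv (Eq.symm ?_)
  unfold fc; ring

/-- zeroth, first, second moment-type integrals -/
def J0 (t : ℝ) : ℂ := ∫ x : ℝ, Complex.exp (fc t x)
def J1 (t : ℝ) : ℂ := ∫ x : ℝ, Complex.I * (x:ℂ)^3 * Complex.exp (fc t x)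
def J2 (t : ℝ) : ℂ := ∫ x : ℝ, -(x:ℂ)^6 * Complex.exp (fc t x)

lemma abs_pow_le (x : ℝ) (k n : ℕ) (h : k ≤ 2*n) : |x| ^ k ≤ 1 + x ^ (2*n) := by
  rcases le_or_gt (|x|) 1 with hx | hx
  · have h1 : |x| ^ k ≤ 1 := pow_le_one₀ (abs_nonneg x) hx
    have h2 : 0 ≤ x ^ (2*n) := by rw [pow_mul]; positivity
    linarith
  · have h1 : |x| ^ k ≤ |x| ^ (2*n) := pow_le_pow_right₀ hx.le h
    have h2 : |x| ^ (2*n) = x ^ (2*n) := by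
      rw [← _root_.abs_pow]
      exact abs_of_nonneg (by rw [pow_mul]; positivity)
    linarith

lemma int0 (t : ℝ) : Integrable fun x : ℝ => Complex.exp (fc t x) := by
  refine integrable_dom (cont_exp_fc t) 1 0 fun x => ?_
  rw [norm_exp_fc]
  have := Real.exp_pos (-(2⁻¹:ℝ) * x^2)
  nlinarith

lemma int1 (t : ℝ) : Integrable fun x : ℝ => Complex.I * (x:ℂ)^3 * Complex.exp (fc t x) := by
  refine integrable_dom (by unfold fc; fun_prop) 1 4 fun x => ?_
  rw [norm_mul, norm_mul, norm_exp_fc]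
  simp only [Complex.norm_I, one_mul, norm_pow, Complex.norm_real, Real.norm_eq_abs]
  have h : |x|^3 ≤ 1 + x^4 := by simpa using abs_pow_le x 3 2 (by norm_num)
  have he := (Real.exp_pos (-(2⁻¹:ℝ) * x^2)).le
  nlinarith [mul_le_mul_of_nonneg_right h he]

lemma int2 (t : ℝ) : Integrable fun x : ℝ => -(x:ℂ)^6 * Complex.exp (fc t x) := by
  refine integrable_dom (by unfold fc; fun_prop) 1 6 fun x => ?_
  rw [norm_mul, norm_neg, norm_exp_fc]
  simp only [norm_pow, Complex.norm_real, Real.norm_eq_abs]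
  have h : |x|^6 ≤ 1 + x^6 := by simpa using abs_pow_le x 6 3 (by norm_num)
  have he := (Real.exp_pos (-(2⁻¹:ℝ) * x^2)).le
  nlinarith [mul_le_mul_of_nonneg_right h he]

lemma bound3_int : Integrable fun x : ℝ => |x|^3 * Real.exp (-(2⁻¹:ℝ) * x^2) := by
  refine integrable_dom (by fun_prop) 1 4 fun x => ?_
  have h : |x|^3 ≤ 1 + x^4 := by simpa using abs_pow_le x 3 2 (by norm_num)
  have he := (Real.exp_pos (-(2⁻¹:ℝ) * x^2)).le
  rw [Real.norm_eq_abs, _root_.abs_of_nonneg (by positivity)]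
  nlinarith [mul_le_mul_of_nonneg_right h he]

lemma hasDerivAt_J0 (t : ℝ) : HasDerivAt J0 (J1 t) t := by
  have := hasDerivAt_integral_of_dominated_loc_of_deriv_le (μ := volume)
    (F := fun (u : ℝ) (x : ℝ) => Complex.exp (fc u x))
    (F' := fun (u : ℝ) (x : ℝ) => Complex.I * (x:ℂ)^3 * Complex.exp (fc u x))
    (x₀ := t) (s := Metric.ball t 1)
    (bound := fun x : ℝ => |x|^3 * Real.exp (-(2⁻¹:ℝ) * x^2))
    (Metric.ball_mem_nhds t one_pos)
    (Eventually.of_forall fun u => (cont_exp_fc u).aestronglyMeasurable)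
    (int0 t)
    ((by unfold fc; fun_prop : Continuous fun x : ℝ => Complex.I * (x:ℂ)^3 * Complex.exp (fc t x)).aestronglyMeasurable)
    (Eventually.of_forall fun x => fun u _ => by
      rw [norm_mul, norm_mul, norm_exp_fc]
      simp [Complex.norm_I])
    bound3_int
    (Eventually.of_forall fun x => fun u _ => hasDerivAt_exp_fc u x)
  exact this.2


lemma bound6_int : Integrable fun x : ℝ => x^6 * Real.exp (-(2⁻¹:ℝ) * x^2) := gauss_int 6

lemma hasDerivAt_J1 (t : ℝ) : HasDerivAt J1 (J2 t) t := by
  have key : ∀ (u : ℝ) (x : ℝ), HasDerivAt (fun v : ℝ => Complex.I * (x:ℂ)^3 * Complex.exp (fc v x))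
      (-(x:ℂ)^6 * Complex.exp (fc u x)) u := by
    intro u x
    have h := (hasDerivAt_exp_fc u x).const_mul (Complex.I * (x:ℂ)^3)
    refine h.congr_deriv (Eq.symm ?_)
    linear_combination (-(x:ℂ)^6 * Complex.exp (fc u x)) * Complex.I_sq
  have := hasDerivAt_integral_of_dominated_loc_of_deriv_le (μ := volume)
    (F := fun (u : ℝ) (x : ℝ) => Complex.I * (x:ℂ)^3 * Complex.exp (fc u x))
    (F' := fun (u : ℝ) (x : ℝ) => -(x:ℂ)^6 * Complex.exp (fc u x))
    (x₀ := t) (s := Metric.ball t 1)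
    (bound := fun x : ℝ => x^6 * Real.exp (-(2⁻¹:ℝ) * x^2))
    (Metric.ball_mem_nhds t one_pos)
    (Eventually.of_forall fun u =>
      ((by unfold fc; fun_prop : Continuous fun x : ℝ =>
        Complex.I * (x:ℂ)^3 * Complex.exp (fc u x))).aestronglyMeasurable)
    (int1 t)
    ((by unfold fc; fun_prop : Continuous fun x : ℝ =>
      -(x:ℂ)^6 * Complex.exp (fc t x)).aestronglyMeasurable)
    (Eventually.of_forall fun x => fun u _ => by
      rw [norm_mul, norm_neg, norm_exp_fc]
      simp only [norm_pow, Complex.norm_real, Real.norm_eq_abs, neg_mul]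
      rw [show |x| ^ 6 = x ^ 6 by rw [← _root_.abs_pow]; exact abs_of_nonneg (by positivity)]
      )
    bound6_int
    (Eventually.of_forall fun x => fun u _ => key u x)
  exact this.2


/-- the IBP auxiliary polynomial -/
def gC (t : ℝ) (z : ℂ) : ℂ :=
  9*Complex.I*t^2*z^4 + 3*t*z^3 - Complex.I*z^2 + 15*t*z - 2*Complex.I

/-- the combined polynomial -/
def PC (t : ℝ) (z : ℂ) : ℂ := -27*t^3*z^6 + (81*t^2+1)*Complex.I*z^3 + 15*t

lemma hasDerivAt_G (t x : ℝ) :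
    HasDerivAt (fun y : ℝ => gC t y * Complex.exp (fc t y))
      (PC t x * Complex.exp (fc t x)) x := by
  have h1 : HasDerivAt (fun z : ℂ => -z^2/2 + Complex.I*t*z^3)
      (-(x:ℂ) + 3*Complex.I*t*(x:ℂ)^2) (x:ℂ) := by
    have ha := ((hasDerivAt_pow 2 (x:ℂ)).div_const 2).neg
    have hb := (hasDerivAt_pow 3 (x:ℂ)).const_mul (Complex.I*(t:ℂ))
    have hc := ha.add hb
    convert hc using 1
    · rfl
    · rfl
    · funext z; simp only [Pi.add_apply, Pi.neg_apply]; ring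
    · push_cast; ring
  have hg : HasDerivAt (fun z : ℂ => gC t z)
      (36*Complex.I*t^2*(x:ℂ)^3 + 9*t*(x:ℂ)^2 - 2*Complex.I*(x:ℂ) + 15*t) (x:ℂ) := by
    have h4 := (hasDerivAt_pow 4 (x:ℂ)).const_mul (9*Complex.I*(t:ℂ)^2)
    have h3 := (hasDerivAt_pow 3 (x:ℂ)).const_mul (3*(t:ℂ))
    have h2 := (hasDerivAt_pow 2 (x:ℂ)).const_mul (Complex.I)
    have h1' := (hasDerivAt_id (x:ℂ)).const_mul (15*(t:ℂ))
    have hc := (((h4.add h3).sub h2).add h1').sub_const (2*Complex.I)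
    refine hc.congr_deriv (Eq.symm ?_)
    push_cast
    ring
  have hprod := hg.mul h1.cexp
  have hreal := hprod.comp_ofReal (z := x)
  refine hreal.congr_deriv (Eq.symm ?_)
  unfold PC gC fc
  linear_combination (-27*(t:ℂ)^3*(x:ℂ)^6 + 3*(t:ℂ)*(x:ℂ)^4 + 6*(t:ℂ)*(x:ℂ)^2) *
      Complex.exp (-(x:ℂ)^2/2 + Complex.I*t*(x:ℂ)^3) * Complex.I_sq


lemma tendsto_B_atTop :
    Tendsto (fun x : ℝ => (1 + x^4) * Real.exp (-(2⁻¹:ℝ) * x^2)) atTop (𝓝 0) := by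
  have hg : Tendsto (fun x : ℝ => Real.exp (-x) + x^4 * Real.exp (-x)) atTop (𝓝 0) := by
    have h0 := Real.tendsto_pow_mul_exp_neg_atTop_nhds_zero 0
    have h4 := Real.tendsto_pow_mul_exp_neg_atTop_nhds_zero 4
    have := h0.add h4
    simpa using this
  apply squeeze_zero' (Eventually.of_forall fun x => by positivity) _ hg
  filter_upwards [eventually_ge_atTop (2:ℝ)] with x hx
  have hle : Real.exp (-(2⁻¹:ℝ) * x^2) ≤ Real.exp (-x) := Real.exp_le_exp.2 (by nlinarith)
  have hx4 : (0:ℝ) ≤ x^4 := by positivity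
  nlinarith [mul_le_mul_of_nonneg_left hle hx4]

lemma tendsto_B_atBot :
    Tendsto (fun x : ℝ => (1 + x^4) * Real.exp (-(2⁻¹:ℝ) * x^2)) atBot (𝓝 0) := by
  have h := tendsto_B_atTop.comp tendsto_neg_atBot_atTop
  refine h.congr fun x => ?_
  simp only [Function.comp_apply]
  rw [show ((-x:ℝ))^4 = x^4 by ring, show ((-x:ℝ))^2 = x^2 by ring]

lemma norm_g_le (t x : ℝ) :
    ‖gC t (x:ℂ)‖ ≤ (9*t^2 + 3*|t| + 1 + 15*|t| + 2) * (1 + x^4) := by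
  have hx4 : |x|^4 = x^4 := by
    rw [← _root_.abs_pow]; exact abs_of_nonneg (by positivity)
  have hx3 : |x|^3 ≤ 1 + x^4 := by simpa using abs_pow_le x 3 2 (by norm_num)
  have hx2 : |x|^2 ≤ 1 + x^4 := by simpa using abs_pow_le x 2 2 (by norm_num)
  have hx1 : |x| ≤ 1 + x^4 := by simpa using abs_pow_le x 1 2 (by norm_num)
  have ht : (0:ℝ) ≤ |t| := abs_nonneg t
  have h1 : ‖gC t (x:ℂ)‖ ≤ 9 * t^2 * |x| ^ 4 + 3 * |t| * (|x| ^ 3) + |x| ^ 2 + 15 * |t| * |x| + 2 := by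
    unfold gC
    refine le_trans (norm_sub_le _ _) ?_
    refine add_le_add (le_trans (norm_add_le _ _) (add_le_add (le_trans (norm_sub_le _ _)
      (add_le_add (le_trans (norm_add_le _ _) (add_le_add ?_ ?_)) ?_)) ?_)) ?_
    all_goals simp [norm_mul, Complex.norm_I, norm_pow, Complex.norm_real, Real.norm_eq_abs,
      _root_.sq_abs]
  have hnn : (0:ℝ) ≤ 1 + x^4 := by positivity
  nlinarith [mul_le_mul_of_nonneg_left hx3 ht, mul_le_mul_of_nonneg_left hx1 ht,
    sq_nonneg t, sq_nonneg x, hx2, hx4, h1]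

lemma norm_G_le (t x : ℝ) :
    ‖gC t (x:ℂ) * Complex.exp (fc t x)‖ ≤
      (9*t^2 + 3*|t| + 1 + 15*|t| + 2) * ((1 + x^4) * Real.exp (-(2⁻¹:ℝ) * x^2)) := by
  rw [norm_mul, norm_exp_fc, ← mul_assoc]
  exact mul_le_mul_of_nonneg_right (norm_g_le t x) (Real.exp_pos _).le

lemma tendsto_G_atTop (t : ℝ) :
    Tendsto (fun x : ℝ => gC t (x:ℂ) * Complex.exp (fc t x)) atTop (𝓝 0) := by
  refine squeeze_zero_norm (norm_G_le t) ?_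
  simpa using tendsto_B_atTop.const_mul (9*t^2 + 3*|t| + 1 + 15*|t| + 2)

lemma tendsto_G_atBot (t : ℝ) :
    Tendsto (fun x : ℝ => gC t (x:ℂ) * Complex.exp (fc t x)) atBot (𝓝 0) := by
  refine squeeze_zero_norm (norm_G_le t) ?_
  simpa using tendsto_B_atBot.const_mul (9*t^2 + 3*|t| + 1 + 15*|t| + 2)

lemma PC_int (t : ℝ) : Integrable fun x : ℝ => PC t x * Complex.exp (fc t x) := by
  have h := (((int2 t).const_mul ((27*t^3 : ℝ):ℂ)).add
    ((int1 t).const_mul ((81*t^2+1 : ℝ):ℂ))).add ((int0 t).const_mul ((15*t:ℝ):ℂ))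
  refine h.congr (Eventually.of_forall fun x => ?_)
  simp only [Pi.add_apply]
  unfold PC; push_cast; ring

lemma integral_PC (t : ℝ) : (∫ x : ℝ, PC t x * Complex.exp (fc t x)) = 0 := by
  have hint := PC_int t
  have hIic := integral_Iic_of_hasDerivAt_of_tendsto' (a := 0)
    (f := fun y : ℝ => gC t y * Complex.exp (fc t y))
    (f' := fun x : ℝ => PC t x * Complex.exp (fc t x))
    (fun x _ => hasDerivAt_G t x) hint.integrableOn (tendsto_G_atBot t)
  have hIoi := integral_Ioi_of_hasDerivAt_of_tendsto' (a := 0)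
    (f := fun y : ℝ => gC t y * Complex.exp (fc t y))
    (f' := fun x : ℝ => PC t x * Complex.exp (fc t x))
    (fun x _ => hasDerivAt_G t x) hint.integrableOn (tendsto_G_atTop t)
  have hsplit := intervalIntegral.integral_Iic_add_Ioi (μ := volume) (b := 0)
    (f := fun x : ℝ => PC t x * Complex.exp (fc t x)) hint.integrableOn hint.integrableOn
  rw [← hsplit, hIic, hIoi]
  ring

end SC13
end
end Aux

open Filter Complex Topology in
/-- `φ` satisfies the second-order ODE `27t³ φ'' + (81t² + 1) φ' + 15t φ = 0`. -/
theorem stmt_13 (t : ℝ) :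
    27 * (t : ℂ) ^ 3 * deriv (deriv phiCube) t
      + (81 * (t : ℂ) ^ 2 + 1) * deriv phiCube t + 15 * (t : ℂ) * phiCube t = 0 := by
  set c : ℂ := 1 / (Real.sqrt (2 * Real.pi) : ℂ) with hc
  have hphi : phiCube = fun u => c * SC13.J0 u := rfl
  have hd1 : ∀ u : ℝ, HasDerivAt phiCube (c * SC13.J1 u) u := by
    intro u
    rw [hphi]
    exact (SC13.hasDerivAt_J0 u).const_mul c
  have hderiv1 : deriv phiCube = fun u => c * SC13.J1 u := funext fun u => (hd1 u).deriv
  have hderiv2 : deriv (deriv phiCube) t = c * SC13.J2 t := by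
    rw [hderiv1]
    exact ((SC13.hasDerivAt_J1 t).const_mul c).deriv
  have key : (27*(t:ℂ)^3) * SC13.J2 t + (81*(t:ℂ)^2+1) * SC13.J1 t
      + 15*(t:ℂ) * SC13.J0 t = 0 := by
    have h2' := (SC13.int2 t).const_mul (27*(t:ℂ)^3)
    have h1' := (SC13.int1 t).const_mul (81*(t:ℂ)^2+1)
    have h0' := (SC13.int0 t).const_mul (15*(t:ℂ))
    have h10 : Integrable (fun x : ℝ => (81*(t:ℂ)^2+1) * (Complex.I*(x:ℂ)^3*Complex.exp (SC13.fc t x))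
        + 15*(t:ℂ) * Complex.exp (SC13.fc t x)) volume := h1'.add h0'
    calc (27*(t:ℂ)^3) * SC13.J2 t + (81*(t:ℂ)^2+1) * SC13.J1 t + 15*(t:ℂ) * SC13.J0 t
        = ∫ x : ℝ, (27*(t:ℂ)^3) * (-(x:ℂ)^6 * Complex.exp (SC13.fc t x))
            + ((81*(t:ℂ)^2+1) * (Complex.I*(x:ℂ)^3*Complex.exp (SC13.fc t x))
            + 15*(t:ℂ) * Complex.exp (SC13.fc t x)) := by
          rw [integral_add h2' h10, integral_add h1' h0',
            integral_const_mul, integral_const_mul, integral_const_mul]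
          unfold SC13.J0 SC13.J1 SC13.J2
          ring
      _ = ∫ x : ℝ, SC13.PC t x * Complex.exp (SC13.fc t x) := by
          congr 1
          funext x
          unfold SC13.PC
          ring
      _ = 0 := SC13.integral_PC t
  rw [hderiv2, hderiv1, hphi]
  simp only
  linear_combination c * key
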